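/- For every s > 0 and P > 0, the near-field joint density p_NF^S(x₁,x₂) = (1/(√(2πs)·A₁·P)) · e^{−(x₁+x₂)²/(2s)} · sint²((x₁−x₂)²/(4P²)) has cross moment ∫_{ℝ²} x₁ x₂ p_NF^S(x₁,x₂) dx₁ dx₂ = (1/4)(s − 4A₂P²/A₁), where A₁ := ∫_ℝ sint²(ξ²) dξ and A₂ := ∫_ℝ ξ² sint²(ξ²) dξ. -/

import Mathlib

open MeasureTheory Real Set Filter Topology intervalIntegral
set_option maxHeartbeats 1000000

/-- `sinc x = sin x / x` for `x ≠ 0`, and `sinc 0 = 1`. -/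
noncomputable def _root_.sinc (x : ℝ) : ℝ := if x = 0 then 1 else Real.sin x / x

/-- `sint x = 1 − (2/π) ∫₀ˣ sinc t dt`. -/
noncomputable def sint (x : ℝ) : ℝ := 1 - (2 / Real.pi) * ∫ t in (0:ℝ)..x, _root_.sinc t

/-- `A₁ = ∫_ℝ sint²(ξ²) dξ`. -/
noncomputable def A₁ : ℝ := ∫ ξ : ℝ, (sint (ξ ^ 2)) ^ 2

/-- The near-field joint probability density of the SPDC two-photon state. -/
noncomputable def pNF (s P x₁ x₂ : ℝ) : ℝ :=
  (Real.sqrt (2 * Real.pi * s) * A₁ * P)⁻¹ * Real.exp (-(x₁ + x₂) ^ 2 / (2 * s)) *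
    (sint ((x₁ - x₂) ^ 2 / (4 * P ^ 2))) ^ 2

/-- `A₂ = ∫_ℝ ξ² sint²(ξ²) dξ`. -/
noncomputable def A₂ : ℝ := ∫ ξ : ℝ, ξ ^ 2 * (sint (ξ ^ 2)) ^ 2

lemma sinc_zero : _root_.sinc 0 = 1 := by simp [_root_.sinc]

lemma sinc_of_ne {x : ℝ} (hx : x ≠ 0) : _root_.sinc x = Real.sin x / x := by simp [_root_.sinc, hx]

lemma abs_sinc_le_one (x : ℝ) : |_root_.sinc x| ≤ 1 := by
  rcases eq_or_ne x 0 with rfl | hx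
  · simp [_root_.sinc]
  · rw [_root_.sinc_of_ne hx, abs_div, div_le_one (abs_pos.2 hx)]
    exact (Real.abs_sin_lt_abs hx).le

lemma continuous_sinc : Continuous _root_.sinc := by
  rw [continuous_iff_continuousAt]
  intro x
  rcases eq_or_ne x 0 with rfl | hx
  · have h : Tendsto (slope Real.sin 0) (𝓝[≠] 0) (𝓝 1) := by
      have := Real.hasDerivAt_sin 0
      rw [Real.cos_zero] at this
      exact hasDerivAt_iff_tendsto_slope.1 this
    have h2 : Tendsto _root_.sinc (𝓝[≠] 0) (𝓝 1) := by
      refine h.congr' ?_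
      filter_upwards [self_mem_nhdsWithin] with t ht
      simp [slope, _root_.sinc_of_ne ht, Real.sin_zero, div_eq_inv_mul]
    have : Tendsto _root_.sinc (𝓝 0) (𝓝 1) := by
      rw [← nhdsNE_sup_pure 0]
      refine h2.sup ?_
      rw [tendsto_pure_left]
      intro s hs
      simpa [_root_.sinc_zero] using mem_of_mem_nhds hs
    simpa [ContinuousAt, _root_.sinc_zero] using this
  · have : ContinuousAt (fun t => Real.sin t / t) x :=
      Real.continuous_sin.continuousAt.div continuousAt_id hx
    refine this.congr ?_
    filter_upwards [isOpen_ne.mem_nhds hx] with t ht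
    exact (_root_.sinc_of_ne ht).symm

lemma continuous_sint : Continuous sint := by
  have h : Continuous fun x : ℝ => ∫ t in (0:ℝ)..x, _root_.sinc t :=
    intervalIntegral.continuous_primitive
      (fun a b => _root_.continuous_sinc.intervalIntegrable a b) 0
  unfold sint
  fun_prop

lemma sint_zero : sint 0 = 1 := by simp [sint]

lemma integral_exp_neg_mul_Ioi {t : ℝ} (ht : 0 < t) :
    ∫ s in Ioi (0:ℝ), Real.exp (-(t*s)) = 1 / t := by
  have hd : ∀ s ∈ Ici (0:ℝ), HasDerivAt (fun s => -Real.exp (-(t*s)) / t)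
      (Real.exp (-(t*s))) s := by
    intro s _
    have h1 : HasDerivAt (fun s : ℝ => -(t*s)) (-t) s := by
      simpa [Pi.neg_def] using ((hasDerivAt_id s).const_mul t).neg
    have h2 := h1.exp.neg.div_const t
    refine HasDerivAt.congr_deriv h2 ?_
    field_simp
  have hint : IntegrableOn (fun s => Real.exp (-(t*s))) (Ioi (0:ℝ)) := by
    simpa [neg_mul] using exp_neg_integrableOn_Ioi 0 ht
  have htend : Tendsto (fun s => -Real.exp (-(t*s)) / t) atTop (𝓝 0) := by
    have h1 : Tendsto (fun s : ℝ => -(t*s)) atTop atBot :=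
      tendsto_neg_atBot_iff.2 (Tendsto.const_mul_atTop ht tendsto_id)
    have h2 := (Real.tendsto_exp_atBot.comp h1).neg.div_const t
    simpa using h2
  have := integral_Ioi_of_hasDerivAt_of_tendsto' hd hint htend
  rw [this]
  simp [div_eq_mul_inv]

lemma inner_exp_sin (s A : ℝ) :
    ∫ t in (0:ℝ)..A, Real.exp (-(s*t)) * Real.sin t
      = (1 - Real.exp (-(s*A)) * (Real.cos A + s * Real.sin A)) / (1 + s^2) := by
  have h1s : (1:ℝ) + s^2 ≠ 0 := by positivity
  have hd : ∀ t ∈ uIcc (0:ℝ) A,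
      HasDerivAt (fun t => -(Real.exp (-(s*t)) * (Real.cos t + s * Real.sin t)) / (1 + s^2))
        (Real.exp (-(s*t)) * Real.sin t) t := by
    intro t _
    have he : HasDerivAt (fun t : ℝ => Real.exp (-(s*t))) (Real.exp (-(s*t)) * (-s)) t := by
      have h1 : HasDerivAt (fun t : ℝ => -(s*t)) (-s) t := by
        simpa [Pi.neg_def] using ((hasDerivAt_id t).const_mul s).neg
      exact h1.exp
    have hc : HasDerivAt (fun t : ℝ => Real.cos t + s * Real.sin t)
        (-Real.sin t + s * Real.cos t) t :=
      (Real.hasDerivAt_cos t).add ((Real.hasDerivAt_sin t).const_mul s)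
    have h2 := ((he.mul hc).neg.div_const (1 + s^2))
    refine HasDerivAt.congr_deriv h2 ?_
    field_simp
    ring
  have hint : IntervalIntegrable (fun t => Real.exp (-(s*t)) * Real.sin t) volume 0 A :=
    (Continuous.intervalIntegrable (by fun_prop) 0 A)
  rw [intervalIntegral.integral_eq_sub_of_hasDerivAt hd hint]
  field_simp
  simp
  ring

lemma Si_eq (A : ℝ) (hA : 0 < A) :
    ∫ t in (0:ℝ)..A, _root_.sinc t
      = ∫ s in Ioi (0:ℝ),
          (1 - Real.exp (-(s*A)) * (Real.cos A + s * Real.sin A)) / (1 + s^2) := by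
  have hmeas : AEStronglyMeasurable (fun z : ℝ × ℝ => Real.sin z.1 * Real.exp (-(z.1*z.2)))
      ((volume.restrict (Ioc (0:ℝ) A)).prod (volume.restrict (Ioi (0:ℝ)))) :=
    (Continuous.aestronglyMeasurable (by fun_prop))
  have hF : Integrable (fun z : ℝ × ℝ => Real.sin z.1 * Real.exp (-(z.1*z.2)))
      ((volume.restrict (Ioc (0:ℝ) A)).prod (volume.restrict (Ioi (0:ℝ)))) := by
    rw [integrable_prod_iff hmeas]
    constructor
    · filter_upwards [ae_restrict_mem measurableSet_Ioc] with t ht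
      have : IntegrableOn (fun s => Real.exp (-(t*s))) (Ioi (0:ℝ)) := by
        simpa [neg_mul] using exp_neg_integrableOn_Ioi 0 ht.1
      exact this.const_mul _
    · apply Integrable.mono' (integrable_const (1:ℝ))
      · exact hmeas.norm.integral_prod_right'
      · filter_upwards [ae_restrict_mem measurableSet_Ioc] with t ht
        have hval : ∫ s in Ioi (0:ℝ), ‖Real.sin t * Real.exp (-(t*s))‖
            = |Real.sin t| * (1/t) := by
          rw [← integral_exp_neg_mul_Ioi ht.1, ← MeasureTheory.integral_const_mul]
          congr 1 with s
          rw [norm_mul, Real.norm_eq_abs, Real.norm_eq_abs, abs_of_pos (Real.exp_pos _)]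
        rw [Real.norm_eq_abs, hval, abs_of_nonneg (mul_nonneg (abs_nonneg _) (one_div_nonneg.2 ht.1.le))]
        rw [mul_one_div, div_le_one ht.1]
        calc |Real.sin t| ≤ |t| := (Real.abs_sin_lt_abs (ne_of_gt ht.1)).le
        _ = t := abs_of_pos ht.1
  rw [intervalIntegral.integral_of_le hA.le]
  have step1 : ∫ t in Ioc (0:ℝ) A, _root_.sinc t
      = ∫ t in Ioc (0:ℝ) A, ∫ s in Ioi (0:ℝ), Real.sin t * Real.exp (-(t*s)) := by
    refine setIntegral_congr_fun measurableSet_Ioc fun t ht => ?_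
    rw [MeasureTheory.integral_const_mul, integral_exp_neg_mul_Ioi ht.1, _root_.sinc_of_ne (ne_of_gt ht.1)]
    ring
  rw [step1, integral_integral_swap hF]
  refine setIntegral_congr_fun measurableSet_Ioi fun s _ => ?_
  rw [← intervalIntegral.integral_of_le hA.le, ← inner_exp_sin s A]
  congr 1 with t
  rw [mul_comm t s, mul_comm]

lemma err_bound {A s : ℝ} (hs0 : 0 < s) :
    ‖Real.exp (-(s*A)) * (Real.cos A + s * Real.sin A) / (1 + s^2)‖
      ≤ 2 * Real.exp (-(A*s)) := by
  have h1s : (0:ℝ) < 1 + s^2 := by positivity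
  rw [Real.norm_eq_abs, abs_div, abs_mul, abs_of_pos (Real.exp_pos _),
    abs_of_pos h1s, mul_comm s A, div_le_iff₀ h1s]
  have hb : |Real.cos A + s * Real.sin A| ≤ 1 + s := by
    calc |Real.cos A + s * Real.sin A| ≤ |Real.cos A| + |s * Real.sin A| := abs_add_le _ _
    _ ≤ 1 + s := by
      have h1 := Real.abs_cos_le_one A
      have h2 : |s * Real.sin A| ≤ s := by
        rw [abs_mul, abs_of_pos hs0]
        nlinarith [Real.abs_sin_le_one A]
      linarith
  have h3 : (1 + s) ≤ 2 * (1 + s^2) := by nlinarith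
  nlinarith [Real.exp_pos (-(A*s)), abs_nonneg (Real.cos A + s * Real.sin A)]

lemma Si_near {A : ℝ} (hA : 0 < A) : |(∫ t in (0:ℝ)..A, _root_.sinc t) - π/2| ≤ 2 / A := by
  have herr : IntegrableOn
      (fun s => Real.exp (-(s*A)) * (Real.cos A + s * Real.sin A) / (1 + s^2))
      (Ioi (0:ℝ)) := by
    have hexp : IntegrableOn (fun s => Real.exp (-(A*s))) (Ioi (0:ℝ)) := by
      simpa [neg_mul] using exp_neg_integrableOn_Ioi 0 hA
    have hg : IntegrableOn (fun s => 2 * Real.exp (-(A*s))) (Ioi (0:ℝ)) := hexp.const_mul 2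
    have hcont : Continuous fun s : ℝ =>
        Real.exp (-(s*A)) * (Real.cos A + s * Real.sin A) / (1 + s^2) := by
      apply Continuous.div (by fun_prop) (by fun_prop)
      intro x; positivity
    apply Integrable.mono' hg hcont.aestronglyMeasurable
    filter_upwards [ae_restrict_mem measurableSet_Ioi] with s hs
    exact err_bound hs
  have hsplit : ∫ s in Ioi (0:ℝ),
      (1 - Real.exp (-(s*A)) * (Real.cos A + s * Real.sin A)) / (1 + s^2)
      = (∫ s in Ioi (0:ℝ), (1 + s^2)⁻¹)
        - ∫ s in Ioi (0:ℝ), Real.exp (-(s*A)) * (Real.cos A + s * Real.sin A) / (1 + s^2) := by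
    rw [← integral_sub integrable_inv_one_add_sq.integrableOn herr]
    congr 1 with s
    have h1s : (1:ℝ) + s^2 ≠ 0 := by positivity
    field_simp
  rw [Si_eq A hA, hsplit, integral_Ioi_inv_one_add_sq, Real.arctan_zero]
  have hE : |∫ s in Ioi (0:ℝ), Real.exp (-(s*A)) * (Real.cos A + s * Real.sin A) / (1 + s^2)|
      ≤ 2 / A := by
    have hb := MeasureTheory.norm_integral_le_of_norm_le
      (f := fun s => Real.exp (-(s*A)) * (Real.cos A + s * Real.sin A) / (1 + s^2))
      (g := fun s => 2 * Real.exp (-(A*s)))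
      (μ := volume.restrict (Ioi (0:ℝ))) ?_ ?_
    · have : ∫ s in Ioi (0:ℝ), 2 * Real.exp (-(A*s)) = 2 / A := by
        rw [MeasureTheory.integral_const_mul, integral_exp_neg_mul_Ioi hA]
        ring
      rw [this] at hb
      exact hb
    · have hexp : IntegrableOn (fun s => Real.exp (-(A*s))) (Ioi (0:ℝ)) := by
        simpa [neg_mul] using exp_neg_integrableOn_Ioi 0 hA
      exact hexp.const_mul 2
    · filter_upwards [ae_restrict_mem measurableSet_Ioi] with s hs
      exact err_bound hs
  have hre : π/2 - 0
      - (∫ s in Ioi (0:ℝ), Real.exp (-(s*A)) * (Real.cos A + s * Real.sin A) / (1 + s^2))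
      - π/2
      = -(∫ s in Ioi (0:ℝ), Real.exp (-(s*A)) * (Real.cos A + s * Real.sin A) / (1 + s^2)) := by
    ring
  rw [hre, abs_neg]
  exact hE

lemma abs_sint_le {x : ℝ} (hx : 0 < x) : |sint x| ≤ 2 / x := by
  have h := Si_near hx
  have hpi : (0:ℝ) < π := Real.pi_pos
  have hrw : sint x = (2/π) * (π/2 - ∫ t in (0:ℝ)..x, _root_.sinc t) := by
    unfold sint
    field_simp
  rw [hrw, abs_mul, abs_of_pos (by positivity : (0:ℝ) < 2/π), abs_sub_comm]
  have hle : 2/π ≤ 1 := by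
    rw [div_le_one hpi]
    linarith [Real.two_le_pi]
  calc 2/π * |(∫ t in (0:ℝ)..x, _root_.sinc t) - π/2| ≤ 1 * (2/x) :=
        mul_le_mul hle h (abs_nonneg _) one_pos.le
  _ = 2/x := one_mul _

lemma integrable_of_cont_of_bound {f : ℝ → ℝ} (hc : Continuous f)
    (he : ∀ x, f (-x) = f x) (hb : ∀ x, 1 ≤ x → ‖f x‖ ≤ 4 / x^2) : Integrable f := by
  have h1 : IntegrableOn f (Ioi (1:ℝ)) := by
    have hg : IntegrableOn (fun x : ℝ => 4 * x ^ (-2:ℝ)) (Ioi 1) :=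
      (integrableOn_Ioi_rpow_of_lt (by norm_num) one_pos).const_mul 4
    apply Integrable.mono' hg hc.aestronglyMeasurable.restrict
    filter_upwards [ae_restrict_mem measurableSet_Ioi] with x hx
    have hx1 : (1:ℝ) ≤ x := le_of_lt hx
    have h0 : (0:ℝ) < x := by linarith
    have heq : (4:ℝ) / x^2 = 4 * x ^ (-2:ℝ) := by
      rw [Real.rpow_neg h0.le, div_eq_mul_inv, ← Real.rpow_natCast x 2]
      norm_num
    exact (hb x hx1).trans_eq heq
  have h2 : IntegrableOn f (Icc (-1:ℝ) 1) := hc.integrableOn_Icc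
  have h3 : IntegrableOn f (Iio (-1:ℝ)) := by
    rw [← (Measure.measurePreserving_neg (volume : Measure ℝ)).integrableOn_comp_preimage
      (Homeomorph.neg ℝ).measurableEmbedding]
    have hfe : (f ∘ Neg.neg) = f := funext fun x => he x
    rw [hfe]
    have hpre : (Neg.neg ⁻¹' (Iio (-1:ℝ)) : Set ℝ) = Ioi 1 := by
      ext x; simp
    rw [hpre]
    exact h1
  have hu : IntegrableOn f (univ : Set ℝ) := by
    have hset : (univ : Set ℝ) = Iio (-1) ∪ (Icc (-1) 1 ∪ Ioi 1) := by
      ext x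
      simp only [mem_univ, mem_union, mem_Iio, mem_Icc, mem_Ioi, true_iff]
      rcases lt_trichotomy x (-1) with h | h | h
      · exact Or.inl h
      · exact Or.inr (Or.inl ⟨le_of_eq h.symm, by linarith⟩)
      · rcases le_or_gt x 1 with h' | h'
        · exact Or.inr (Or.inl ⟨h.le, h'⟩)
        · exact Or.inr (Or.inr h')
    rw [hset]
    exact h3.union (h2.union h1)
  rwa [integrableOn_univ] at hu

lemma integrable_sint_sq : Integrable (fun ξ : ℝ => sint (ξ^2) ^ 2) := by
  apply integrable_of_cont_of_bound
  · exact (continuous_sint.comp (continuous_pow 2)).pow 2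
  · intro x; rw [neg_pow]; norm_num
  · intro x hx
    have h0 : (0:ℝ) < x := by linarith
    have hx2 : (0:ℝ) < x^2 := by positivity
    have h := abs_sint_le hx2
    have h1 : sint (x^2)^2 ≤ (2/x^2)^2 := by
      rw [← sq_abs]
      exact pow_le_pow_left₀ (abs_nonneg _) h 2
    rw [Real.norm_eq_abs, abs_of_nonneg (sq_nonneg _)]
    calc sint (x^2)^2 ≤ (2/x^2)^2 := h1
    _ = 4 / x^4 := by ring
    _ ≤ 4 / x^2 := by
        apply div_le_div_of_nonneg_left (by norm_num) (by positivity)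
        nlinarith [sq_nonneg x, sq_nonneg (x^2 - x)]

lemma integrable_sq_sint_sq : Integrable (fun ξ : ℝ => ξ^2 * sint (ξ^2) ^ 2) := by
  apply integrable_of_cont_of_bound
  · exact (continuous_pow 2).mul ((continuous_sint.comp (continuous_pow 2)).pow 2)
  · intro x; rw [neg_pow]; norm_num
  · intro x hx
    have h0 : (0:ℝ) < x := by linarith
    have hx2 : (0:ℝ) < x^2 := by positivity
    have h := abs_sint_le hx2
    have h1 : sint (x^2)^2 ≤ (2/x^2)^2 := by
      rw [← sq_abs]
      exact pow_le_pow_left₀ (abs_nonneg _) h 2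
    rw [Real.norm_eq_abs, abs_of_nonneg (mul_nonneg (sq_nonneg _) (sq_nonneg _))]
    calc x^2 * sint (x^2)^2 ≤ x^2 * (2/x^2)^2 :=
          mul_le_mul_of_nonneg_left h1 (sq_nonneg _)
    _ = 4 / x^2 := by field_simp; ring

lemma integrable_sq_gaussian {b : ℝ} (hb : 0 < b) :
    Integrable (fun x : ℝ => x^2 * Real.exp (-b * x^2)) := by
  have := integrable_rpow_mul_exp_neg_mul_sq hb (s := ((2:ℕ):ℝ)) (by norm_num)
  simpa [Real.rpow_natCast] using this

lemma integral_sq_gaussian {b : ℝ} (hb : 0 < b) :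
    ∫ x : ℝ, x^2 * Real.exp (-b * x^2) = Real.sqrt (π / b) / (2*b) := by
  have hint2 : Integrable (fun x : ℝ => x^2 * Real.exp (-b * x^2)) := integrable_sq_gaussian hb
  have hd : ∀ x : ℝ, HasDerivAt (fun x : ℝ => x * Real.exp (-b*x^2))
      (Real.exp (-b*x^2) - 2*b*x^2*Real.exp (-b*x^2)) x := by
    intro x
    have h1 : HasDerivAt (fun x : ℝ => -b*x^2) (-b*(2*x)) x := by
      simpa using (hasDerivAt_pow 2 x).const_mul (-b)
    have h2 := (hasDerivAt_id x).mul h1.exp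
    refine HasDerivAt.congr_deriv h2 ?_
    simp only [id]
    ring
  have hf'int : Integrable (fun x : ℝ =>
      Real.exp (-b*x^2) - 2*b*x^2*Real.exp (-b*x^2)) := by
    apply (integrable_exp_neg_mul_sq hb).sub
    have := hint2.const_mul (2*b)
    simpa [mul_assoc] using this
  have htop : Tendsto (fun x : ℝ => x * Real.exp (-b*x^2)) atTop (𝓝 0) := by
    have hlo := rpow_mul_exp_neg_mul_sq_isLittleO_exp_neg hb 1
    have hg : Tendsto (fun x : ℝ => Real.exp (-(1/2) * x)) atTop (𝓝 0) := by
      have h1 : Tendsto (fun x : ℝ => -(1/2) * x) atTop atBot := by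
        have h0 : Tendsto (fun x : ℝ => (1/2 : ℝ) * x) atTop atTop :=
          Tendsto.const_mul_atTop (by norm_num) tendsto_id
        have h2 := tendsto_neg_atBot_iff.2 h0
        refine h2.congr fun x => ?_
        ring
      exact Real.tendsto_exp_atBot.comp h1
    have h2 := hlo.trans_tendsto hg
    refine h2.congr ?_
    intro x
    rw [Real.rpow_one]
  have hbot : Tendsto (fun x : ℝ => x * Real.exp (-b*x^2)) atBot (𝓝 0) := by
    have h1 : Tendsto (fun x : ℝ => -x * Real.exp (-b*(-x)^2)) atBot (𝓝 0) :=
      htop.comp tendsto_neg_atBot_atTop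
    have h2 := h1.neg
    rw [neg_zero] at h2
    refine h2.congr ?_
    intro x
    simp only [neg_sq, neg_mul, neg_neg]
  have hzero := integral_of_hasDerivAt_of_tendsto hd hf'int hbot htop
  rw [sub_self] at hzero
  have hsub := integral_sub (integrable_exp_neg_mul_sq hb)
    (by simpa [mul_assoc] using hint2.const_mul (2*b) :
      Integrable (fun x : ℝ => 2*b*x^2*Real.exp (-b*x^2)))
  rw [hsub] at hzero
  have h2b : ∫ x : ℝ, 2*b*x^2*Real.exp (-b*x^2)
      = 2*b * ∫ x : ℝ, x^2*Real.exp (-b*x^2) := by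
    rw [← MeasureTheory.integral_const_mul]
    congr 1 with x
    ring
  rw [h2b, integral_gaussian] at hzero
  have hb2 : (2*b) ≠ 0 := by positivity
  field_simp at hzero ⊢
  linarith

lemma A₁_pos : 0 < A₁ := by
  have h0 : (0:ℝ) < sint ((0:ℝ)^2)^2 := by
    rw [show ((0:ℝ)^2) = 0 by norm_num, sint_zero]; norm_num
  have hopen : IsOpen {x : ℝ | 0 < sint (x^2)^2} :=
    isOpen_lt continuous_const ((continuous_sint.comp (continuous_pow 2)).pow 2)
  have hsub : {x : ℝ | 0 < sint (x^2)^2} ⊆ Function.support fun ξ : ℝ => sint (ξ^2)^2 :=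
    fun x hx => ne_of_gt hx
  have hpos : 0 < volume (Function.support fun ξ : ℝ => sint (ξ^2)^2) :=
    lt_of_lt_of_le (hopen.measure_pos volume ⟨0, h0⟩) (measure_mono hsub)
  exact (integral_pos_iff_support_of_nonneg (fun ξ => sq_nonneg _) integrable_sint_sq).2 hpos

noncomputable def ψ : (ℝ × ℝ) ≃ₗ[ℝ] (ℝ × ℝ) where
  toFun p := (p.1 + p.2, p.1 - p.2)
  invFun p := ((p.1 + p.2)/2, (p.1 - p.2)/2)
  map_add' a b := by simp [Prod.ext_iff]; constructor <;> ring
  map_smul' c a := by simp [Prod.ext_iff, smul_eq_mul, mul_add, mul_sub]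
  left_inv p := by simp [Prod.ext_iff]
  right_inv p := by simp [Prod.ext_iff]; constructor <;> ring

lemma det_ψ : LinearMap.det (ψ : (ℝ × ℝ) →ₗ[ℝ] (ℝ × ℝ)) = -2 := by
  rw [← LinearMap.det_toMatrix (Module.Basis.finTwoProd ℝ), Matrix.det_fin_two]
  simp [LinearMap.toMatrix_apply, Module.Basis.finTwoProd, ψ]
  norm_num

noncomputable def ψe : (ℝ × ℝ) ≃ᵐ (ℝ × ℝ) :=
  ψ.toContinuousLinearEquiv.toHomeomorph.toMeasurableEquiv

lemma ψe_apply (p : ℝ × ℝ) : ψe p = (p.1 + p.2, p.1 - p.2) := rfl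

lemma map_ψe : Measure.map ψe (volume : Measure (ℝ × ℝ))
    = ENNReal.ofReal 2⁻¹ • volume := by
  have h := Measure.map_linearMap_addHaar_eq_smul_addHaar
    (μ := (volume : Measure (ℝ × ℝ))) (f := (ψ : (ℝ × ℝ) →ₗ[ℝ] (ℝ × ℝ)))
    (by rw [det_ψ]; norm_num)
  rw [det_ψ] at h
  have hco : (⇑ψe : ℝ × ℝ → ℝ × ℝ) = ⇑(ψ : (ℝ × ℝ) →ₗ[ℝ] (ℝ × ℝ)) := rfl
  rw [hco, h]
  norm_num [abs_of_nonneg]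

lemma integral_comp_ψ (f : ℝ × ℝ → ℝ) :
    ∫ p : ℝ × ℝ, f p = 2 * ∫ p : ℝ × ℝ, f (ψe p) := by
  have h := MeasureTheory.integral_map_equiv (μ := (volume : Measure (ℝ × ℝ))) ψe f
  rw [map_ψe, MeasureTheory.integral_smul_measure] at h
  rw [← h]
  rw [ENNReal.toReal_ofReal (by norm_num)]
  simp [smul_eq_mul]


/-- For every `s > 0` and `P > 0`, the cross moment of the near-field joint
density is `∫ x₁ x₂ p_NF^S(x₁,x₂) dx₁ dx₂ = (1/4)(s − 4A₂P²/A₁)`. -/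
theorem pNF_crossMoment (s P : ℝ) (hs : 0 < s) (hP : 0 < P) :
    ∫ x : ℝ × ℝ, x.1 * x.2 * pNF s P x.1 x.2
      = (1 / 4) * (s - 4 * A₂ * P ^ 2 / A₁) := by

  have hA1 : A₁ ≠ 0 := ne_of_gt A₁_pos
  have hPne : P ≠ 0 := ne_of_gt hP
  have hsne : s ≠ 0 := ne_of_gt hs
  have hb : (0:ℝ) < 2/s := by positivity
  rw [integral_comp_ψ (fun x : ℝ × ℝ => x.1 * x.2 * pNF s P x.1 x.2)]
  have hpt : ∀ p : ℝ × ℝ,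
      (ψe p).1 * (ψe p).2 * pNF s P (ψe p).1 (ψe p).2
      = (Real.sqrt (2 * π * s) * A₁ * P)⁻¹ *
          ((p.1^2 * Real.exp (-(2/s) * p.1^2)) * sint ((p.2*P⁻¹)^2)^2
           - Real.exp (-(2/s) * p.1^2) * (p.2^2 * sint ((p.2*P⁻¹)^2)^2)) := by
    intro p
    rw [ψe_apply]
    simp only [pNF]
    have h1 : (-(p.1 + p.2 + (p.1 - p.2))^2) / (2*s) = -(2/s) * p.1^2 := by
      field_simp; ring
    have h2 : ((p.1 + p.2) - (p.1 - p.2))^2 / (4*P^2) = (p.2*P⁻¹)^2 := by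
      field_simp; ring
    rw [h1, h2]
    ring
  simp_rw [hpt]
  have hE : Integrable (fun u : ℝ => Real.exp (-(2/s) * u^2)) := integrable_exp_neg_mul_sq hb
  have hE2 : Integrable (fun u : ℝ => u^2 * Real.exp (-(2/s) * u^2)) := integrable_sq_gaussian hb
  have hG : Integrable (fun v : ℝ => sint ((v*P⁻¹)^2)^2) :=
    integrable_sint_sq.comp_mul_right' (inv_ne_zero hPne)
  have hG2 : Integrable (fun v : ℝ => v^2 * sint ((v*P⁻¹)^2)^2) := by
    have h := (integrable_sq_sint_sq.comp_mul_right' (R := P⁻¹) (inv_ne_zero hPne)).const_mul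
      (P^2)
    have heq : (fun v : ℝ => P^2 * ((v*P⁻¹)^2 * sint ((v*P⁻¹)^2)^2))
        = fun v : ℝ => v^2 * sint ((v*P⁻¹)^2)^2 := by
      funext v
      have : (v*P⁻¹)^2 * P^2 = v^2 := by field_simp
      rw [← this]; ring
    rwa [heq] at h
  have hvol : (volume : Measure (ℝ × ℝ)) = (volume : Measure ℝ).prod volume :=
    Measure.volume_eq_prod ℝ ℝ
  have hprod1 : Integrable
      (fun p : ℝ × ℝ => (p.1^2 * Real.exp (-(2/s) * p.1^2)) * sint ((p.2*P⁻¹)^2)^2) := by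
    rw [hvol]; exact hE2.mul_prod hG
  have hprod2 : Integrable
      (fun p : ℝ × ℝ => Real.exp (-(2/s) * p.1^2) * (p.2^2 * sint ((p.2*P⁻¹)^2)^2)) := by
    rw [hvol]; exact hE.mul_prod hG2
  rw [MeasureTheory.integral_const_mul, integral_sub hprod1 hprod2]
  have hi1 : ∫ p : ℝ × ℝ, (p.1^2 * Real.exp (-(2/s) * p.1^2)) * sint ((p.2*P⁻¹)^2)^2
      = (∫ u : ℝ, u^2 * Real.exp (-(2/s) * u^2)) * ∫ v : ℝ, sint ((v*P⁻¹)^2)^2 := by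
    rw [hvol]
    exact integral_prod_mul (fun u : ℝ => u^2 * Real.exp (-(2/s) * u^2))
      (fun v : ℝ => sint ((v*P⁻¹)^2)^2)
  have hi2 : ∫ p : ℝ × ℝ, Real.exp (-(2/s) * p.1^2) * (p.2^2 * sint ((p.2*P⁻¹)^2)^2)
      = (∫ u : ℝ, Real.exp (-(2/s) * u^2)) * ∫ v : ℝ, v^2 * sint ((v*P⁻¹)^2)^2 := by
    rw [hvol]
    exact integral_prod_mul (fun u : ℝ => Real.exp (-(2/s) * u^2))
      (fun v : ℝ => v^2 * sint ((v*P⁻¹)^2)^2)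
  rw [hi1, hi2, integral_sq_gaussian hb, integral_gaussian]
  have hJ1 : ∫ v : ℝ, sint ((v*P⁻¹)^2)^2 = P * A₁ := by
    have := Measure.integral_comp_mul_right (fun ξ : ℝ => sint (ξ^2)^2) P⁻¹
    rw [this, inv_inv, abs_of_pos hP, smul_eq_mul, A₁]
  have hJ2 : ∫ v : ℝ, v^2 * sint ((v*P⁻¹)^2)^2 = P^3 * A₂ := by
    have heq : (fun v : ℝ => v^2 * sint ((v*P⁻¹)^2)^2)
        = fun v : ℝ => P^2 * ((v*P⁻¹)^2 * sint ((v*P⁻¹)^2)^2) := by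
      funext v
      have : (v*P⁻¹)^2 * P^2 = v^2 := by field_simp
      rw [← this]; ring
    rw [heq, MeasureTheory.integral_const_mul]
    have := Measure.integral_comp_mul_right (fun ξ : ℝ => ξ^2 * sint (ξ^2)^2) P⁻¹
    rw [this, inv_inv, abs_of_pos hP, smul_eq_mul, A₂]
    ring
  rw [hJ1, hJ2]
  have hsq : Real.sqrt (π/(2/s)) = Real.sqrt (2*π*s) / 2 := by
    have h4 : π/(2/s) = (2*π*s)/4 := by field_simp; ring
    rw [h4, Real.sqrt_div' _ (by norm_num : (0:ℝ) ≤ 4)]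
    · congr 1
      rw [show (4:ℝ) = 2^2 by norm_num, Real.sqrt_sq (by norm_num : (0:ℝ) ≤ 2)]
  rw [hsq]
  have hS : (0:ℝ) < Real.sqrt (2*π*s) := Real.sqrt_pos.2 (by positivity)
  have hSne : Real.sqrt (2*π*s) ≠ 0 := ne_of_gt hS
  field_simp
  ring
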